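/- Let (Ω,μ) be a probability space, N ∈ ℕ, and let X^N be an N-dimensional linear subspace of real-valued measurable functions on Ω, each belonging to L_2(μ). Suppose κ, β > 0 are such that: (i) |x(t)| ≤ β·√N·‖x‖_{L_2(μ)} for all t ∈ Ω and all x ∈ X^N, and (ii) min(‖f−g‖_{L_2(μ)}, ‖f+g‖_{L_2(μ)}) ≤ κ·‖ |f| − |g| ‖_{L_2(μ)} for all f, g ∈ X^N. Then every x ∈ X^N satisfies ‖x‖_{L_1(μ)} ≤ ‖x‖_{L_2(μ)} ≤ κ^3·(1+β^2)^{3/2}·‖x‖_{L_1(μ)}. -/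

import Mathlib

open MeasureTheory Set

private lemma stmt13_pt_min (a b : ℝ) : (|a + b| - |a - b|)^2 = 4 * (min |a| |b|)^2 := by
  have h1 : |a+b| * |a-b| = |a^2 - b^2| := by rw [← abs_mul]; ring_nf
  have h2 : min |a| |b| ^ 2 = min (a^2) (b^2) := by
    rcases le_total |a| |b| with h|h
    · rw [min_eq_left h,
        min_eq_left (by nlinarith [abs_nonneg a, sq_abs a, sq_abs b] : a^2 ≤ b^2), sq_abs]
    · rw [min_eq_right h,
        min_eq_right (by nlinarith [abs_nonneg b, sq_abs a, sq_abs b] : b^2 ≤ a^2), sq_abs]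
  have h3 : min (a^2) (b^2) = (a^2 + b^2 - |a^2 - b^2|) / 2 := by
    rcases le_total (a^2) (b^2) with h|h
    · rw [min_eq_left h, abs_of_nonpos (by linarith)]; ring
    · rw [min_eq_right h, abs_of_nonneg (by linarith)]; ring
  have h4 : |a+b|^2 = (a+b)^2 := sq_abs _
  have h5 : |a-b|^2 = (a-b)^2 := sq_abs _
  rw [h2, h3]; nlinarith [h1, h4, h5]

private lemma stmt13_min_abs_sq (a b : ℝ) : (min |a| |b|) ^ 2 = min (a^2) (b^2) := by
  rcases le_total |a| |b| with h|h
  · rw [min_eq_left h,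
      min_eq_left (by nlinarith [abs_nonneg a, sq_abs a, sq_abs b] : a^2 ≤ b^2), sq_abs]
  · rw [min_eq_right h,
      min_eq_right (by nlinarith [abs_nonneg b, sq_abs a, sq_abs b] : b^2 ≤ a^2), sq_abs]

private lemma stmt13_min_sq_le (x β : ℝ) (hβ : 0 ≤ β) : min (x^2) (β^2) ≤ β * |x| := by
  rcases min_cases (x^2) (β^2) with ⟨h1,h2⟩|⟨h1,h2⟩
  · have hx : |x| ≤ β := by nlinarith [abs_nonneg x, sq_abs x]
    rw [h1, ← sq_abs x]; nlinarith [abs_nonneg x]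
  · have hx : β ≤ |x| := by nlinarith [abs_nonneg x, sq_abs x]
    rw [h1]; nlinarith

private lemma stmt13_int_mul {Ω : Type*} [MeasurableSpace Ω] {μ : Measure Ω} {x z : Ω → ℝ}
    (hx : Measurable x) (hz : Measurable z)
    (hx2 : MemLp x 2 μ) (hz2 : MemLp z 2 μ) : Integrable (fun s => x s * z s) μ := by
  refine Integrable.mono' ((hx2.integrable_sq.add hz2.integrable_sq).const_mul (1/2))
    ((hx.mul hz).aestronglyMeasurable) (Filter.Eventually.of_forall fun s => ?_)
  rw [Real.norm_eq_abs, abs_mul]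
  simp only [Pi.add_apply]
  nlinarith [sq_nonneg (|x s| - |z s|), sq_abs (x s), sq_abs (z s),
    abs_nonneg (x s), abs_nonneg (z s)]

/-- Cauchy–Schwarz on a probability space: `‖f‖₁ ≤ ‖f‖₂`. -/
private lemma stmt13_l1_le_l2 {Ω : Type*} [MeasurableSpace Ω] (μ : Measure Ω)
    [IsProbabilityMeasure μ] {f : Ω → ℝ} (hfm : Measurable f) (hf2 : MemLp f 2 μ) :
    (∫ s, |f s| ∂μ) ≤ (∫ s, |f s| ^ 2 ∂μ) ^ ((1 : ℝ) / 2) := by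
  set I1 := ∫ s, |f s| ∂μ with hI1
  set I2 := ∫ s, |f s| ^ 2 ∂μ with hI2
  have hf1 : Integrable f μ := hf2.integrable (by norm_num)
  have hfa : Integrable (fun s => |f s|) μ := hf1.abs
  have hsq : Integrable (fun s => |f s| ^ 2) μ := by
    refine hf2.integrable_sq.congr (Filter.Eventually.of_forall fun s => ?_)
    simp [sq_abs]
  have hI10 : 0 ≤ I1 := integral_nonneg fun s => abs_nonneg _
  have key : I1 ^ 2 ≤ I2 := by
    have h0 : 0 ≤ ∫ s, (|f s| - I1)^2 ∂μ := integral_nonneg fun s => sq_nonneg _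
    have hexp : ∫ s, (|f s| - I1)^2 ∂μ = I2 - I1^2 := by
      have hfa2 : Integrable (fun s => (2*I1) * |f s|) μ := hfa.const_mul _
      have hsub : Integrable (fun s => |f s|^2 - (2*I1) * |f s|) μ := hsq.sub hfa2
      have e : ∀ s, (|f s| - I1)^2 = (|f s|^2 - (2*I1) * |f s|) + I1^2 := fun s => by ring
      simp_rw [e]
      rw [integral_add hsub (integrable_const _), integral_sub hsq hfa2,
        integral_const_mul, integral_const]
      simp only [measure_univ, probReal_univ, ENNReal.toReal_one, one_smul, smul_eq_mul, one_mul, ← hI1, ← hI2]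
      ring
    nlinarith [h0, hexp]
  rw [← Real.sqrt_eq_rpow]
  exact Real.le_sqrt_of_sq_le key

set_option maxHeartbeats 1000000 in
theorem stmt13 {Ω : Type*} [MeasurableSpace Ω] (μ : Measure Ω) [IsProbabilityMeasure μ]
    (N : ℕ) (X : Submodule ℝ (Ω → ℝ)) (hdim : Module.finrank ℝ X = N)
    (hmem : ∀ f ∈ X, Measurable f ∧ MemLp f 2 μ)
    (κ β : ℝ) (hκ : 0 < κ) (hβ : 0 < β)
    (hNik : ∀ f ∈ X, ∀ t : Ω,
      |f t| ≤ β * Real.sqrt N * (∫ s, |f s| ^ 2 ∂μ) ^ ((1 : ℝ) / 2))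
    (hstab : ∀ f ∈ X, ∀ g ∈ X,
      min ((∫ s, |f s - g s| ^ 2 ∂μ) ^ ((1 : ℝ) / 2))
          ((∫ s, |f s + g s| ^ 2 ∂μ) ^ ((1 : ℝ) / 2)) ≤
        κ * (∫ s, (|f s| - |g s|) ^ 2 ∂μ) ^ ((1 : ℝ) / 2)) :
    ∀ f ∈ X,
      (∫ s, |f s| ∂μ) ≤ (∫ s, |f s| ^ 2 ∂μ) ^ ((1 : ℝ) / 2) ∧
        (∫ s, |f s| ^ 2 ∂μ) ^ ((1 : ℝ) / 2) ≤
          κ ^ 3 * (1 + β ^ 2) ^ ((3 : ℝ) / 2) * ∫ s, |f s| ∂μ := by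
  intro f hf
  obtain ⟨hfm, hf2⟩ := hmem f hf
  refine ⟨stmt13_l1_le_l2 μ hfm hf2, ?_⟩
  set I1 := ∫ s, |f s| ∂μ with hI1
  set I2 := ∫ s, |f s| ^ 2 ∂μ with hI2
  have hI10 : 0 ≤ I1 := integral_nonneg fun s => abs_nonneg _
  have hI20 : 0 ≤ I2 := integral_nonneg fun s => sq_nonneg _
  have hC0 : 0 ≤ κ ^ 3 * (1 + β ^ 2) ^ ((3 : ℝ) / 2) := by positivity
  rcases eq_or_lt_of_le hI20 with hI2z | hI2pos
  · rw [← hI2z, Real.zero_rpow (by norm_num : (1:ℝ)/2 ≠ 0)]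
    positivity
  -- main case : I2 > 0
  -- first : N ≥ 1
  have hN : 1 ≤ N := by
    by_contra h
    have hN0 : N = 0 := by omega
    have := hNik f hf
    rw [hN0] at this
    simp only [Nat.cast_zero, Real.sqrt_zero, mul_zero, zero_mul] at this
    have hf0 : ∀ t, f t = 0 := fun t => abs_nonpos_iff.mp (this t)
    have : I2 = 0 := by
      rw [hI2]
      simp [hf0]
    linarith
  -- κ ≥ 1
  have hκ1 : 1 ≤ κ := by
    have hg : (1/2 : ℝ) • f ∈ X := X.smul_mem _ hf
    have h := hstab f hf ((1/2 : ℝ) • f) hg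
    have e1 : (∫ s, |f s - ((1/2:ℝ) • f) s| ^ 2 ∂μ) = (1/4) * I2 := by
      rw [← integral_const_mul]
      refine integral_congr_ae (Filter.Eventually.of_forall fun s => ?_)
      simp only [Pi.smul_apply, smul_eq_mul]
      rw [show f s - 1/2 * f s = (1/2) * f s by ring, abs_mul, mul_pow, sq_abs]
      norm_num
    have e2 : (∫ s, |f s + ((1/2:ℝ) • f) s| ^ 2 ∂μ) = (9/4) * I2 := by
      rw [← integral_const_mul]
      refine integral_congr_ae (Filter.Eventually.of_forall fun s => ?_)
      simp only [Pi.smul_apply, smul_eq_mul]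
      rw [show f s + 1/2 * f s = (3/2) * f s by ring, abs_mul, mul_pow, sq_abs]
      norm_num
    have e3 : (∫ s, (|f s| - |((1/2:ℝ) • f) s|) ^ 2 ∂μ) = (1/4) * I2 := by
      rw [← integral_const_mul]
      refine integral_congr_ae (Filter.Eventually.of_forall fun s => ?_)
      simp only [Pi.smul_apply, smul_eq_mul]
      rw [abs_mul, show |(1/2:ℝ)| = 1/2 by norm_num,
        show |f s| - 1/2 * |f s| = (1/2) * |f s| by ring, mul_pow, sq_abs]
      norm_num
    rw [e1, e2, e3] at h
    simp only [← Real.sqrt_eq_rpow] at h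
    rw [min_eq_left (Real.sqrt_le_sqrt (by linarith))] at h
    have hpos : 0 < Real.sqrt ((1/4) * I2) := Real.sqrt_pos.mpr (by linarith)
    nlinarith [h, hpos]
  -- setup inner product space structure on X
  have hint : ∀ x z : ↥X, Integrable (fun s => (x : Ω → ℝ) s * (z : Ω → ℝ) s) μ := fun x z =>
    stmt13_int_mul (hmem x x.2).1 (hmem z z.2).1 (hmem x x.2).2 (hmem z z.2).2
  letI c : InnerProductSpace.Core ℝ ↥X :=
  { inner := fun x z => ∫ s, (x : Ω → ℝ) s * (z : Ω → ℝ) s ∂μ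
    conj_inner_symm := fun x z => by
      simp only [RCLike.star_def, starRingEnd_apply, star_trivial]
      exact integral_congr_ae (Filter.Eventually.of_forall fun s => mul_comm _ _)
    re_inner_nonneg := fun x => by
      simpa using integral_nonneg (fun s => mul_self_nonneg ((x : Ω → ℝ) s))
    add_left := fun x y z => by
      simp only [Submodule.coe_add, Pi.add_apply, add_mul]
      exact integral_add (hint x z) (hint y z)
    smul_left := fun x z r => by
      simp only [Submodule.coe_smul, Pi.smul_apply, smul_eq_mul, mul_assoc, RCLike.star_def,
        starRingEnd_apply, star_trivial]
      exact integral_const_mul r _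
    definite := fun x hx => by
      have h0 : (∫ s, |(x : Ω → ℝ) s| ^ 2 ∂μ) = 0 := by
        rw [← hx]
        exact integral_congr_ae (Filter.Eventually.of_forall fun s => by simp [sq_abs]; ring)
      have hb := fun t => hNik x x.2 t
      rw [h0] at hb
      simp only [Real.zero_rpow (by norm_num : (1:ℝ)/2 ≠ 0), mul_zero] at hb
      exact Subtype.ext (funext fun t => abs_nonpos_iff.mp (hb t)) }
  letI : NormedAddCommGroup ↥X := c.toNormedAddCommGroup
  letI : InnerProductSpace ℝ ↥X := InnerProductSpace.ofCore c.toCore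
  haveI : FiniteDimensional ℝ ↥X := FiniteDimensional.of_finrank_pos (by omega)
  let B := stdOrthonormalBasis ℝ ↥X
  have hBo : ∀ i j, (∫ s, (B i : Ω → ℝ) s * (B j : Ω → ℝ) s ∂μ) = if i = j then 1 else 0 := by
    intro i j
    have := orthonormal_iff_ite.mp B.orthonormal i j
    exact this
  -- Christoffel function bound
  have hChr : ∀ t : Ω, (∑ i, ((B i : Ω → ℝ) t)^2) ≤ β^2 * N := by
    intro t
    set K := ∑ i, ((B i : Ω → ℝ) t)^2 with hK
    have hK0 : 0 ≤ K := Finset.sum_nonneg fun i _ => sq_nonneg _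
    set x : ↥X := ∑ i, ((B i : Ω → ℝ) t) • B i with hxdef
    have hinner0 : (inner ℝ x x : ℝ) = K := by
      have h := B.orthonormal.inner_sum (fun i => ((B i : Ω → ℝ) t))
        (fun i => ((B i : Ω → ℝ) t)) Finset.univ
      simpa [← sq, ← hxdef] using h
    have hinner : (∫ s, (x:Ω→ℝ) s * (x:Ω→ℝ) s ∂μ) = K := hinner0
    have hxval : ∀ s, (x : Ω → ℝ) s = ∑ i, ((B i : Ω → ℝ) t) * ((B i : Ω → ℝ) s) := by
      intro s
      rw [hxdef]
      simp [Finset.sum_apply]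
    have hxt : (x : Ω → ℝ) t = K := by
      rw [hxval t, hK]
      exact Finset.sum_congr rfl fun i _ => (sq _).symm
    have hIx : (∫ s, |(x : Ω → ℝ) s| ^ 2 ∂μ) = K := by
      rw [← hinner]
      exact integral_congr_ae (Filter.Eventually.of_forall fun s => by simp [sq_abs]; ring)
    have hN2 := hNik x x.2 t
    rw [hIx, hxt, abs_of_nonneg hK0, ← Real.sqrt_eq_rpow] at hN2
    rcases eq_or_lt_of_le hK0 with h0|h0
    · rw [← h0]; positivity
    · have hsq : Real.sqrt K * Real.sqrt K = K := Real.mul_self_sqrt hK0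
      have hs0 : 0 < Real.sqrt K := Real.sqrt_pos.mpr h0
      have h1 : Real.sqrt K ≤ β * Real.sqrt N := by
        exact le_of_mul_le_mul_right (by rw [hsq]; exact hN2) hs0
      nlinarith [mul_self_le_mul_self (Real.sqrt_nonneg K) h1, Real.mul_self_sqrt hK0,
        Real.mul_self_sqrt (show (0:ℝ) ≤ (N:ℝ) from Nat.cast_nonneg N),
        Real.sqrt_nonneg K, Real.sqrt_nonneg ((N:ℝ))]
  -- normalized function u
  have hsI2 : 0 < Real.sqrt I2 := Real.sqrt_pos.mpr hI2pos
  set u : Ω → ℝ := (Real.sqrt I2)⁻¹ • f with hudef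
  have hu : u ∈ X := X.smul_mem _ hf
  obtain ⟨hum, hu2⟩ := hmem u hu
  have huval : ∀ s, u s = (Real.sqrt I2)⁻¹ * f s := fun s => rfl
  have huabs : ∀ s, |u s| = (Real.sqrt I2)⁻¹ * |f s| := fun s => by
    rw [huval, abs_mul, abs_of_nonneg (by positivity)]
  have hu1int : (∫ s, |u s| ∂μ) = (Real.sqrt I2)⁻¹ * I1 := by
    simp_rw [huabs]
    rw [integral_const_mul, hI1]
  have hu2int : (∫ s, |u s| ^ 2 ∂μ) = 1 := by
    have : ∀ s, |u s| ^ 2 = ((Real.sqrt I2)⁻¹)^2 * |f s|^2 := fun s => by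
      rw [huabs]; ring
    simp_rw [this]
    rw [integral_const_mul, ← hI2, inv_pow, Real.sq_sqrt hI20]
    exact inv_mul_cancel₀ (ne_of_gt hI2pos)
  -- per-basis-vector lower bound
  have hkey : ∀ i, 1/κ^2 ≤ ∫ s, (min |u s| |(B i : Ω → ℝ) s|)^2 ∂μ := by
    intro i
    set g : Ω → ℝ := (B i : Ω → ℝ) with hgdef
    have hg : g ∈ X := (B i).2
    obtain ⟨hgm, hg2⟩ := hmem g hg
    have hgint : (∫ s, g s * g s ∂μ) = 1 := by
      have := hBo i i
      simpa using this
    set M := ∫ s, (min |u s| |g s|)^2 ∂μ with hM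
    have hM0 : 0 ≤ M := integral_nonneg fun s => sq_nonneg _
    have hFmem : (fun s => u s + g s) ∈ X := by
      have := X.add_mem hu hg
      convert this using 1
      rfl
    have hGmem : (fun s => u s - g s) ∈ X := by
      have := X.sub_mem hu hg
      convert this using 1
      rfl
    have h := hstab (fun s => u s + g s) hFmem (fun s => u s - g s) hGmem
    have e1 : (∫ s, |(u s + g s) - (u s - g s)| ^ 2 ∂μ) = 4 := by
      have : ∀ s, |(u s + g s) - (u s - g s)| ^ 2 = 4 * (g s * g s) := fun s => by
        rw [show (u s + g s) - (u s - g s) = 2 * g s by ring, abs_mul, mul_pow, sq_abs]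
        norm_num
        ring
      simp_rw [this]
      rw [integral_const_mul, hgint]
      norm_num
    have e2 : (∫ s, |(u s + g s) + (u s - g s)| ^ 2 ∂μ) = 4 := by
      have : ∀ s, |(u s + g s) + (u s - g s)| ^ 2 = 4 * |u s| ^ 2 := fun s => by
        rw [show (u s + g s) + (u s - g s) = 2 * u s by ring, abs_mul, mul_pow]
        norm_num
      simp_rw [this]
      rw [integral_const_mul, hu2int]
      norm_num
    have e3 : (∫ s, (|u s + g s| - |u s - g s|) ^ 2 ∂μ) = 4 * M := by
      rw [hM, ← integral_const_mul]
      refine integral_congr_ae (Filter.Eventually.of_forall fun s => ?_)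
      exact stmt13_pt_min (u s) (g s)
    rw [e1, e2, e3, ← Real.sqrt_eq_rpow, ← Real.sqrt_eq_rpow, min_self,
      show (4:ℝ) = 2^2 by norm_num, Real.sqrt_sq (by norm_num : (0:ℝ) ≤ 2)] at h
    have h4M : Real.sqrt (2^2 * M) = 2 * Real.sqrt M := by
      rw [Real.sqrt_mul (by norm_num), Real.sqrt_sq (by norm_num : (0:ℝ) ≤ 2)]
    rw [h4M] at h
    have h5 : 1 ≤ κ * Real.sqrt M := by linarith
    have h6 : 1/κ ≤ Real.sqrt M := by
      rw [div_le_iff₀ hκ] at *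
      linarith [mul_comm κ (Real.sqrt M)]
    have h7 : (1/κ)^2 ≤ M := by
      have := mul_self_le_mul_self (by positivity : (0:ℝ) ≤ 1/κ) h6
      rw [Real.mul_self_sqrt hM0] at this
      nlinarith [this]
    calc 1/κ^2 = (1/κ)^2 := by ring
    _ ≤ M := h7
  -- integrability facts
  have hmini : ∀ i, Integrable (fun s => (min |u s| |(B i : Ω → ℝ) s|)^2) μ := by
    intro i
    obtain ⟨hgm, hg2⟩ := hmem _ (B i).2
    refine Integrable.mono' hu2.integrable_sq
      (((hum.abs.min hgm.abs).pow_const 2).aestronglyMeasurable)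
      (Filter.Eventually.of_forall fun s => ?_)
    rw [Real.norm_eq_abs, abs_of_nonneg (sq_nonneg _), ← sq_abs (u s)]
    have h1 : min |u s| |(B i : Ω → ℝ) s| ≤ |u s| := min_le_left _ _
    have h2 : 0 ≤ min |u s| |(B i : Ω → ℝ) s| := le_min (abs_nonneg _) (abs_nonneg _)
    nlinarith
  have hminsum : Integrable (fun s => ∑ i, (min |u s| |(B i : Ω → ℝ) s|)^2) μ :=
    integrable_finset_sum _ fun i _ => hmini i
  have hminb : Integrable (fun s => (N:ℝ) * min (u s ^ 2) (β^2)) μ := by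
    refine Integrable.mono' (integrable_const ((N:ℝ) * β^2))
      ((measurable_const.mul (((hum.pow_const 2)).min measurable_const)).aestronglyMeasurable)
      (Filter.Eventually.of_forall fun s => ?_)
    rw [Real.norm_eq_abs, abs_of_nonneg (by positivity)]
    have : min (u s ^ 2) (β^2) ≤ β^2 := min_le_right _ _
    have hN0 : (0:ℝ) ≤ N := Nat.cast_nonneg N
    nlinarith
  -- summation
  have hsum : (N : ℝ) * (1/κ^2) ≤ ∑ i, ∫ s, (min |u s| |(B i : Ω → ℝ) s|)^2 ∂μ := by
    have := Finset.sum_le_sum (fun i (_ : i ∈ Finset.univ) => hkey i)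
    have hcard : (Finset.univ : Finset (Fin (Module.finrank ℝ ↥X))).card = N := by
      simp [hdim]
    rw [Finset.sum_const, hcard] at this
    simpa [nsmul_eq_mul] using this
  have hswap : ∑ i, ∫ s, (min |u s| |(B i : Ω → ℝ) s|)^2 ∂μ
      = ∫ s, ∑ i, (min |u s| |(B i : Ω → ℝ) s|)^2 ∂μ :=
    (integral_finset_sum _ fun i _ => hmini i).symm
  have hptwise : ∀ s, (∑ i, (min |u s| |(B i : Ω → ℝ) s|)^2) ≤ (N:ℝ) * min (u s ^2) (β^2) := by
    intro s
    have heq : ∀ i, (min |u s| |(B i : Ω → ℝ) s|)^2 = min (u s^2) ((B i : Ω → ℝ) s^2) :=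
      fun i => stmt13_min_abs_sq _ _
    simp_rw [heq]
    rcases min_cases (u s ^ 2) (β^2) with ⟨h1,h2⟩|⟨h1,h2⟩
    · rw [h1]
      calc (∑ i, min (u s^2) ((B i : Ω → ℝ) s^2)) ≤ ∑ i : Fin (Module.finrank ℝ ↥X), u s^2 :=
          Finset.sum_le_sum fun i _ => min_le_left _ _
      _ = (N:ℝ) * u s^2 := by
          rw [Finset.sum_const]
          simp [hdim, nsmul_eq_mul]
    · rw [h1]
      calc (∑ i, min (u s^2) ((B i : Ω → ℝ) s^2)) ≤ ∑ i, ((B i : Ω → ℝ) s)^2 :=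
          Finset.sum_le_sum fun i _ => min_le_right _ _
      _ ≤ β^2 * N := hChr s
      _ = (N:ℝ) * β^2 := by ring
  have hstep : (∫ s, ∑ i, (min |u s| |(B i : Ω → ℝ) s|)^2 ∂μ)
      ≤ ∫ s, (N:ℝ) * min (u s ^2) (β^2) ∂μ :=
    integral_mono hminsum hminb hptwise
  have hstep2 : (∫ s, (N:ℝ) * min (u s ^2) (β^2) ∂μ) ≤ (N:ℝ) * (β * ∫ s, |u s| ∂μ) := by
    rw [integral_const_mul]
    refine mul_le_mul_of_nonneg_left ?_ (show (0:ℝ) ≤ (N:ℝ) from Nat.cast_nonneg N)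
    rw [← integral_const_mul]
    refine integral_mono ?_ ?_ (fun s => stmt13_min_sq_le (u s) β hβ.le)
    · refine Integrable.mono' (integrable_const (β^2))
        (((hum.pow_const 2).min measurable_const).aestronglyMeasurable)
        (Filter.Eventually.of_forall fun s => ?_)
      rw [Real.norm_eq_abs, abs_of_nonneg (le_min (sq_nonneg _) (sq_nonneg _))]
      exact min_le_right _ _
    · exact (hu2.integrable (by norm_num)).abs.const_mul β
  -- conclude
  have hNpos : (0:ℝ) < N := by exact_mod_cast hN
  have hfinal : 1/κ^2 ≤ β * ((Real.sqrt I2)⁻¹ * I1) := by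
    have : (N : ℝ) * (1/κ^2) ≤ (N:ℝ) * (β * ((Real.sqrt I2)⁻¹ * I1)) := by
      rw [← hu1int]
      calc (N : ℝ) * (1/κ^2) ≤ _ := hsum
      _ = _ := hswap
      _ ≤ _ := hstep
      _ ≤ _ := hstep2
    exact le_of_mul_le_mul_left this hNpos
  have hsqrtI2 : Real.sqrt I2 ≤ κ^2 * β * I1 := by
    have h1 : Real.sqrt I2 * (1/κ^2) ≤ Real.sqrt I2 * (β * ((Real.sqrt I2)⁻¹ * I1)) :=
      mul_le_mul_of_nonneg_left hfinal hsI2.le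
    have h2 : Real.sqrt I2 * (β * ((Real.sqrt I2)⁻¹ * I1)) = β * I1 := by
      field_simp
    rw [h2] at h1
    have hκ2 : (0:ℝ) < κ^2 := by positivity
    calc Real.sqrt I2 = κ^2 * (Real.sqrt I2 * (1/κ^2)) := by field_simp
    _ ≤ κ^2 * (β * I1) := mul_le_mul_of_nonneg_left h1 hκ2.le
    _ = κ^2 * β * I1 := by ring
  have hconst : κ^2 * β ≤ κ^3 * (1 + β^2) ^ ((3:ℝ)/2) := by
    have h1b : (1:ℝ) ≤ 1 + β^2 := by nlinarith
    have hb1 : β ≤ Real.sqrt (1 + β^2) := by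
      rw [Real.le_sqrt hβ.le (by linarith)]
      linarith
    have hb2 : Real.sqrt (1 + β^2) = (1 + β^2) ^ ((1:ℝ)/2) := Real.sqrt_eq_rpow _
    have hb3 : (1 + β^2) ^ ((1:ℝ)/2) ≤ (1 + β^2) ^ ((3:ℝ)/2) :=
      Real.rpow_le_rpow_of_exponent_le h1b (by norm_num)
    have hbb : β ≤ (1 + β^2) ^ ((3:ℝ)/2) := by
      calc β ≤ Real.sqrt (1 + β^2) := hb1
      _ = _ := hb2
      _ ≤ _ := hb3
    have hκκ : κ^2 ≤ κ^3 := by nlinarith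
    have hrp0 : (0:ℝ) ≤ (1 + β^2) ^ ((3:ℝ)/2) := Real.rpow_nonneg (by positivity) _
    nlinarith [hκκ, hbb, hrp0, hβ.le, sq_nonneg κ]
  rw [← Real.sqrt_eq_rpow]
  calc Real.sqrt I2 ≤ κ^2 * β * I1 := hsqrtI2
  _ ≤ κ^3 * (1 + β^2) ^ ((3:ℝ)/2) * I1 := mul_le_mul_of_nonneg_right hconst hI10
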